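/- arXiv:1306.0630 — 2 statements merged into one kernel-verified Lean document; each statement's English description precedes it below -/
import Mathlib

section
/- Let f be an n-variate boolean function that is neither monotone nor antimonotone. Then for all k ≥ 0 and b ∈ {0,1}: bs(f^(k)) ≤ bs_b(f^(k+1)) ≤ n · bs(f^(k)), and likewise bs*(f^(k)) ≤ bs*_b(f^(k+1)) ≤ n · bs*(f^(k)), where f^(0) denotes the univariate identity function. In particular, for k ≥ 1, min{bs_0(f^(k)), bs_1(f^(k))} ≥ bs(f^(k))/n, and similarly for fractional block sensitivity. -/
open Filter

namespace BS

variable {I : Type*} [Fintype I] [DecidableEq I]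

/-- Flip the bits of `x` indexed by `B`. -/
def flipSet (x : I → Bool) (B : Finset I) : I → Bool :=
  fun i => if i ∈ B then !(x i) else x i

/-- `B` is a block of `f` at `x`. -/
def IsBlock (f : (I → Bool) → Bool) (x : I → Bool) (B : Finset I) : Prop :=
  f (flipSet x B) ≠ f x

/-- Block sensitivity of `f` at `x`: the maximum number of pairwise disjoint blocks. -/
noncomputable def bsAt (f : (I → Bool) → Bool) (x : I → Bool) : ℕ :=
  sSup {k | ∃ B : Fin k → Finset I, (∀ t, IsBlock f x (B t)) ∧
    ∀ t t', t ≠ t' → Disjoint (B t) (B t')}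

/-- Block sensitivity of `f`. -/
noncomputable def bs (f : (I → Bool) → Bool) : ℕ :=
  sSup {k | ∃ x, k = bsAt f x}

/-- `b`-block sensitivity of `f`. -/
noncomputable def bsb (f : (I → Bool) → Bool) (b : Bool) : ℕ :=
  sSup {k | ∃ x, f x = b ∧ k = bsAt f x}

/-- `M`-fold block sensitivity of `f` at `x`. -/
noncomputable def bsMAt (f : (I → Bool) → Bool) (M : ℕ) (x : I → Bool) : ℕ :=
  sSup {k | ∃ B : Fin k → Finset I, (∀ t, IsBlock f x (B t)) ∧
    ∀ i : I, (Finset.univ.filter (fun t => i ∈ B t)).card ≤ M}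

/-- `M`-fold `b`-block sensitivity of `f`. -/
noncomputable def bsMb (f : (I → Bool) → Bool) (M : ℕ) (b : Bool) : ℕ :=
  sSup {k | ∃ x, f x = b ∧ k = bsMAt f M x}

/-- Fractional block sensitivity of `f` at `x`. -/
noncomputable def fbsAt (f : (I → Bool) → Bool) (x : I → Bool) : ℝ :=
  sSup {s | ∃ lam : Finset I → ℝ, (∀ B, 0 ≤ lam B) ∧
    (∀ B, ¬ IsBlock f x B → lam B = 0) ∧
    (∀ i : I, ∑ B ∈ Finset.univ.filter (fun B : Finset I => i ∈ B), lam B ≤ 1) ∧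
    s = ∑ B : Finset I, lam B}

/-- Fractional block sensitivity of `f`. -/
noncomputable def fbs (f : (I → Bool) → Bool) : ℝ :=
  sSup {s | ∃ x, s = fbsAt f x}

/-- Fractional `b`-block sensitivity of `f`. -/
noncomputable def fbsb (f : (I → Bool) → Bool) (b : Bool) : ℝ :=
  sSup {s | ∃ x, f x = b ∧ s = fbsAt f x}

/-- Certificate complexity of `f` at `x`. -/
noncomputable def CAt (f : (I → Bool) → Bool) (x : I → Bool) : ℕ :=
  sInf {k | ∃ S : Finset I, (∀ B, IsBlock f x B → (S ∩ B).Nonempty) ∧ k = S.card}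

/-- Certificate complexity of `f`. -/
noncomputable def Cm (f : (I → Bool) → Bool) : ℕ :=
  sSup {k | ∃ x, k = CAt f x}

/-- `b`-certificate complexity of `f`. -/
noncomputable def Cb (f : (I → Bool) → Bool) (b : Bool) : ℕ :=
  sSup {k | ∃ x, f x = b ∧ k = CAt f x}

/-- Fractional certificate complexity of `f` at `x`. -/
noncomputable def fCAt (f : (I → Bool) → Bool) (x : I → Bool) : ℝ :=
  sInf {s | ∃ w : I → ℝ, (∀ i, 0 ≤ w i ∧ w i ≤ 1) ∧
    (∀ B, IsBlock f x B → 1 ≤ ∑ i ∈ B, w i) ∧ s = ∑ i, w i}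

/-- Fractional certificate complexity of `f`. -/
noncomputable def fC (f : (I → Bool) → Bool) : ℝ :=
  sSup {s | ∃ x, s = fCAt f x}

/-- Composition `f ∘ g` of boolean functions. -/
def comp {J : Type*} [Fintype J] [DecidableEq J]
    (f : (I → Bool) → Bool) (g : (J → Bool) → Bool) :
    ((I × J) → Bool) → Bool :=
  fun x => f (fun i => g (fun j => x (i, j)))

/-- `k`-fold iterated composition `f^(k)` of an `n`-variate boolean function; the
variables of `f^(k)` are indexed by strings in `Fin k → Fin n`.  `f^(0)` is the
univariate identity function. -/
def iter {n : ℕ} (f : (Fin n → Bool) → Bool) :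
    (k : ℕ) → ((Fin k → Fin n) → Bool) → Bool
  | 0, x => x (fun i => i.elim0)
  | k + 1, x => f (fun i => iter f k (fun s => x (Fin.cons i s)))

/-- Spectral radius of a real square matrix: the maximum of `|μ|` over the complex
eigenvalues `μ` of the matrix. -/
noncomputable def specRad {m : Type*} [Fintype m] [DecidableEq m]
    (A : Matrix m m ℝ) : ℝ :=
  sSup {r | ∃ μ : ℂ, μ ∈ spectrum ℂ (A.map Complex.ofReal) ∧ r = ‖μ‖}

end BS

namespace BSAux
set_option linter.unusedSectionVars false
open BS Finset

variable {I : Type*} [Fintype I] [DecidableEq I] {f : (I → Bool) → Bool}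

/-- the defining set of `bsAt`. -/
def bsSet (f : (I → Bool) → Bool) (x : I → Bool) : Set ℕ :=
  {k | ∃ B : Fin k → Finset I, (∀ t, IsBlock f x (B t)) ∧
    ∀ t t', t ≠ t' → Disjoint (B t) (B t')}

lemma bsAt_eq (x : I → Bool) : bsAt f x = sSup (bsSet f x) := rfl

def fbsSet (f : (I → Bool) → Bool) (x : I → Bool) : Set ℝ :=
  {s | ∃ lam : Finset I → ℝ, (∀ B, 0 ≤ lam B) ∧
    (∀ B, ¬ IsBlock f x B → lam B = 0) ∧
    (∀ i : I, ∑ B ∈ Finset.univ.filter (fun B : Finset I => i ∈ B), lam B ≤ 1) ∧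
    s = ∑ B : Finset I, lam B}

lemma fbsAt_eq (x : I → Bool) : fbsAt f x = sSup (fbsSet f x) := rfl

lemma flipSet_empty (x : I → Bool) : flipSet x (∅ : Finset I) = x := by
  funext i; simp [flipSet]

lemma flipSet_flipSet (x : I → Bool) (B : Finset I) :
    flipSet (flipSet x B) B = x := by
  funext i; by_cases h : i ∈ B <;> simp [flipSet, h]

lemma not_isBlock_empty (x : I → Bool) : ¬ IsBlock f x (∅ : Finset I) := by
  simp [IsBlock, flipSet_empty]

lemma block_nonempty {x : I → Bool} {B : Finset I} (h : IsBlock f x B) :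
    B.Nonempty := by
  rcases B.eq_empty_or_nonempty with h' | h'
  · exact absurd (h' ▸ h) (not_isBlock_empty x)
  · exact h'

lemma zero_mem_bsSet (x : I → Bool) : 0 ∈ bsSet f x :=
  ⟨Fin.elim0, fun t => t.elim0, fun t => t.elim0⟩

lemma bsSet_le (x : I → Bool) {m : ℕ} (hm : m ∈ bsSet f x) :
    m ≤ Fintype.card I := by
  obtain ⟨B, hB, hdisj⟩ := hm
  have hne : ∀ t, (B t).Nonempty := fun t => block_nonempty (hB t)
  have hinj : Function.Injective (fun t => (hne t).choose) := by
    intro t t' h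
    dsimp only at h
    by_contra hne'
    exact (Finset.disjoint_left.1 (hdisj t t' hne')) (hne t).choose_spec
      (h ▸ (hne t').choose_spec)
  simpa using Fintype.card_le_of_injective _ hinj

lemma bsSet_bddAbove (x : I → Bool) : BddAbove (bsSet f x) :=
  ⟨Fintype.card I, fun _ hm => bsSet_le x hm⟩

lemma le_bsAt {x : I → Bool} {m : ℕ} (hm : m ∈ bsSet f x) : m ≤ bsAt f x :=
  le_csSup (bsSet_bddAbove x) hm

lemma bsAt_le {x : I → Bool} {c : ℕ} (h : ∀ m ∈ bsSet f x, m ≤ c) :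
    bsAt f x ≤ c :=
  csSup_le ⟨0, zero_mem_bsSet x⟩ h

lemma bsAt_le_card (x : I → Bool) : bsAt f x ≤ Fintype.card I :=
  bsAt_le fun _ hm => bsSet_le x hm

lemma bsAt_le_bs (x : I → Bool) : bsAt f x ≤ bs f :=
  le_csSup ⟨Fintype.card I, by rintro m ⟨x, rfl⟩; exact bsAt_le_card x⟩ ⟨x, rfl⟩

lemma bsAt_le_bsb {x : I → Bool} {b : Bool} (hx : f x = b) : bsAt f x ≤ bsb f b :=
  le_csSup ⟨Fintype.card I, by rintro m ⟨x, _, rfl⟩; exact bsAt_le_card x⟩ ⟨x, hx, rfl⟩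

lemma bs_le {c : ℕ} (h : ∀ x, bsAt f x ≤ c) : bs f ≤ c :=
  csSup_le' (by rintro m ⟨x, rfl⟩; exact h x)

lemma bsb_le {b : Bool} {c : ℕ} (h : ∀ x, f x = b → bsAt f x ≤ c) : bsb f b ≤ c :=
  csSup_le' (by rintro m ⟨x, hx, rfl⟩; exact h x hx)

/- fractional versions -/

lemma zero_mem_fbsSet (x : I → Bool) : (0 : ℝ) ∈ fbsSet f x :=
  ⟨fun _ => 0, fun _ => le_rfl, fun _ _ => rfl, fun i => by simp, by simp⟩

lemma fbsSet_le (x : I → Bool) {s : ℝ} (hs : s ∈ fbsSet f x) :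
    s ≤ Fintype.card I := by
  obtain ⟨lam, hnn, hzero, hcap, rfl⟩ := hs
  have h1 : ∀ B : Finset I, lam B ≤ ∑ i ∈ B, lam B := by
    intro B
    rcases B.eq_empty_or_nonempty with h | h
    · subst h
      rw [hzero _ (not_isBlock_empty x)]
      simp
    · exact Finset.single_le_sum (fun _ _ => hnn B) h.choose_spec
  calc ∑ B : Finset I, lam B ≤ ∑ B : Finset I, ∑ i ∈ B, lam B :=
        Finset.sum_le_sum fun B _ => h1 B
    _ = ∑ B : Finset I, ∑ i ∈ Finset.univ.filter (· ∈ B), lam B := by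
        apply Finset.sum_congr rfl; intro B _
        congr 1
        simp [Finset.filter_mem_eq_inter]
    _ = ∑ B : Finset I, ∑ i : I, if i ∈ B then lam B else 0 := by
        apply Finset.sum_congr rfl; intro B _
        rw [Finset.sum_filter]
    _ = ∑ i : I, ∑ B : Finset I, if i ∈ B then lam B else 0 := Finset.sum_comm
    _ = ∑ i : I, ∑ B ∈ Finset.univ.filter (fun B : Finset I => i ∈ B), lam B := by
        apply Finset.sum_congr rfl; intro i _
        rw [Finset.sum_filter]
    _ ≤ ∑ _i : I, (1 : ℝ) := Finset.sum_le_sum fun i _ => hcap i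
    _ = Fintype.card I := by simp

lemma fbsSet_bddAbove (x : I → Bool) : BddAbove (fbsSet f x) :=
  ⟨Fintype.card I, fun _ hs => fbsSet_le x hs⟩

lemma le_fbsAt {x : I → Bool} {s : ℝ} (hs : s ∈ fbsSet f x) : s ≤ fbsAt f x :=
  le_csSup (fbsSet_bddAbove x) hs

lemma fbsAt_nonneg (x : I → Bool) : 0 ≤ fbsAt f x :=
  le_fbsAt (zero_mem_fbsSet x)

lemma fbsAt_le {x : I → Bool} {c : ℝ} (h : ∀ s ∈ fbsSet f x, s ≤ c) :
    fbsAt f x ≤ c :=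
  csSup_le ⟨0, zero_mem_fbsSet x⟩ h

lemma fbsAt_le_card (x : I → Bool) : fbsAt f x ≤ Fintype.card I :=
  fbsAt_le fun _ hs => fbsSet_le x hs

lemma fbsAt_le_fbs (x : I → Bool) : fbsAt f x ≤ fbs f :=
  le_csSup ⟨Fintype.card I, by rintro s ⟨x, rfl⟩; exact fbsAt_le_card x⟩ ⟨x, rfl⟩

lemma fbsAt_le_fbsb {x : I → Bool} {b : Bool} (hx : f x = b) :
    fbsAt f x ≤ fbsb f b :=
  le_csSup ⟨Fintype.card I, by rintro s ⟨x, _, rfl⟩; exact fbsAt_le_card x⟩ ⟨x, hx, rfl⟩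

lemma fbs_le {c : ℝ} (h : ∀ x, fbsAt f x ≤ c) : fbs f ≤ c := by
  refine csSup_le ⟨fbsAt f (fun _ => false), ⟨_, rfl⟩⟩ ?_
  rintro s ⟨x, rfl⟩; exact h x

lemma fbsb_le {b : Bool} {c : ℝ} (hc : 0 ≤ c) (h : ∀ x, f x = b → fbsAt f x ≤ c) :
    fbsb f b ≤ c :=
  Real.sSup_le (by rintro s ⟨x, hx, rfl⟩; exact h x hx) hc

lemma fbs_nonneg : 0 ≤ fbs f :=
  le_trans (fbsAt_nonneg (fun _ => false)) (fbsAt_le_fbs _)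

lemma fbsb_nonneg {b : Bool} {x : I → Bool} (hx : f x = b) : 0 ≤ fbsb f b :=
  le_trans (fbsAt_nonneg x) (fbsAt_le_fbsb hx)

end BSAux
namespace BSAux2
open Finset

variable {ι : Type*} [Fintype ι] [DecidableEq ι] {f : (ι → Bool) → Bool}

lemma bool_eq_not {a b : Bool} (h : a ≠ b) : a = !b := by
  cases a <;> cases b <;> simp_all

lemma exists_edge_of_le (f : (ι → Bool) → Bool) :
    ∀ m (x y : ι → Bool), (univ.filter fun i => x i ≠ y i).card = m → x ≤ y → f x ≠ f y →
    ∃ p j, f p = f x ∧ p j = false ∧ f (Function.update p j true) ≠ f p := by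
  intro m
  induction m using Nat.strong_induction_on with
  | _ m ih =>
    intro x y hcard hle hne
    have hxy : x ≠ y := fun h => hne (by rw [h])
    obtain ⟨j, hj⟩ : ∃ j, x j ≠ y j := by
      by_contra h; push_neg at h; exact hxy (funext h)
    have hxj : x j = false ∧ y j = true := by
      have h := hle j; revert h hj; cases x j <;> cases y j <;> simp
    by_cases hfx : f (Function.update x j true) = f x
    · set x' := Function.update x j true with hx'
      have hle' : x' ≤ y := by
        intro i
        by_cases hij : i = j
        · subst hij; simp [hx', hxj.2]
        · rw [hx', Function.update_of_ne hij]; exact hle i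
      have hset : (univ.filter fun i => x' i ≠ y i)
          = (univ.filter fun i => x i ≠ y i).erase j := by
        ext i
        by_cases hij : i = j
        · subst hij
          simp [hx', hxj.2]
        · simp [hx', Function.update_of_ne hij, hij]
      have hjmem : j ∈ (univ.filter fun i => x i ≠ y i) := by simp [hj]
      have hcard' : (univ.filter fun i => x' i ≠ y i).card < m := by
        rw [hset, Finset.card_erase_of_mem hjmem, hcard]
        have : 0 < m := hcard ▸ Finset.card_pos.2 ⟨j, hjmem⟩
        omega
      obtain ⟨p, j', h1, h2, h3⟩ := ih _ hcard' x' y rfl hle' (by rw [hfx]; exact hne)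
      exact ⟨p, j', by rw [h1, hfx], h2, h3⟩
    · exact ⟨x, j, rfl, hxj.1, hfx⟩

lemma not_monotone_edge (hm : ¬ Monotone f) :
    ∃ p j, f p = true ∧ p j = false ∧ f (Function.update p j true) ≠ f p := by
  rw [Monotone] at hm; push_neg at hm
  obtain ⟨x, y, hle, hlt⟩ := hm
  have hv : f x = true ∧ f y = false := by revert hlt; cases h1 : f x <;> cases h2 : f y <;> simp
  obtain ⟨p, j, h1, h2, h3⟩ := exists_edge_of_le f _ x y rfl hle (by rw [hv.1, hv.2]; simp)
  exact ⟨p, j, h1.trans hv.1, h2, h3⟩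

lemma not_antitone_edge (ha : ¬ Antitone f) :
    ∃ p j, f p = false ∧ p j = false ∧ f (Function.update p j true) ≠ f p := by
  rw [Antitone] at ha; push_neg at ha
  obtain ⟨x, y, hle, hlt⟩ := ha
  have hv : f y = true ∧ f x = false := by revert hlt; cases h1 : f x <;> cases h2 : f y <;> simp
  obtain ⟨p, j, h1, h2, h3⟩ := exists_edge_of_le f _ x y rfl hle (by rw [hv.1, hv.2]; simp)
  exact ⟨p, j, h1.trans hv.2, h2, h3⟩

end BSAux2

namespace BSAux3
open BS Finset BSAux BSAux2
set_option linter.unusedSectionVars false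

variable {ι : Type*} [Fintype ι] [DecidableEq ι] {f : (ι → Bool) → Bool}

lemma flipSet_singleton_of_false {p : ι → Bool} {j : ι} (h : p j = false) :
    flipSet p {j} = Function.update p j true := by
  funext i
  by_cases hij : i = j
  · subst hij; simp [flipSet, h]
  · simp [flipSet, hij, Function.update_of_ne hij]

lemma isBlock_flip_singleton {p : ι → Bool} {j : ι} (h : IsBlock f p ({j} : Finset ι)) :
    IsBlock f (flipSet p {j}) ({j} : Finset ι) := by
  rw [IsBlock, flipSet_flipSet]
  exact fun e => h e.symm

lemma flipSet_singleton_apply (p : ι → Bool) (j : ι) : flipSet p {j} j = !(p j) := by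
  simp [flipSet]

lemma edge4 (hm : ¬ Monotone f) (ha : ¬ Antitone f) :
    ∀ b c : Bool, ∃ p j, f p = b ∧ p j = c ∧ IsBlock f p ({j} : Finset ι) := by
  obtain ⟨p1, j1, m1, m2, m3⟩ := not_monotone_edge hm
  obtain ⟨p2, j2, a1, a2, a3⟩ := not_antitone_edge ha
  have blk1 : IsBlock f p1 ({j1} : Finset ι) := by
    rwa [IsBlock, flipSet_singleton_of_false m2]
  have blk2 : IsBlock f p2 ({j2} : Finset ι) := by
    rwa [IsBlock, flipSet_singleton_of_false a2]
  have v1 : f (flipSet p1 {j1}) = false := by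
    rw [bool_eq_not blk1, m1]; rfl
  have v2 : f (flipSet p2 {j2}) = true := by
    rw [bool_eq_not blk2, a1]; rfl
  intro b c
  cases b <;> cases c
  · exact ⟨p2, j2, a1, a2, blk2⟩
  · exact ⟨flipSet p1 {j1}, j1, v1, by rw [flipSet_singleton_apply, m2]; rfl,
      isBlock_flip_singleton blk1⟩
  · exact ⟨p1, j1, m1, m2, blk1⟩
  · exact ⟨flipSet p2 {j2}, j2, v2, by rw [flipSet_singleton_apply, a2]; rfl,
      isBlock_flip_singleton blk2⟩

end BSAux3

namespace BSAux4
open BS Finset BSAux BSAux2 BSAux3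
set_option linter.unusedSectionVars false

variable {n : ℕ} {f : (Fin n → Bool) → Bool}

def sub {k : ℕ} (X : (Fin (k+1) → Fin n) → Bool) (i : Fin n) :
    (Fin k → Fin n) → Bool :=
  fun s => X (Fin.cons i s)

def pre {k : ℕ} (i : Fin n) (B : Finset (Fin (k+1) → Fin n)) :
    Finset (Fin k → Fin n) :=
  univ.filter fun s => Fin.cons i s ∈ B

def embJ {k : ℕ} (j : Fin n) (C : Finset (Fin k → Fin n)) :
    Finset (Fin (k+1) → Fin n) :=
  univ.filter fun q => q 0 = j ∧ Fin.tail q ∈ C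

lemma mem_pre {k : ℕ} {i : Fin n} {B : Finset (Fin (k+1) → Fin n)}
    {s : Fin k → Fin n} : s ∈ pre i B ↔ Fin.cons i s ∈ B := by
  simp [pre]

lemma mem_embJ {k : ℕ} {j : Fin n} {C : Finset (Fin k → Fin n)}
    {q : Fin (k+1) → Fin n} : q ∈ embJ j C ↔ q 0 = j ∧ Fin.tail q ∈ C := by
  simp [embJ]

lemma cons_mem_embJ {k : ℕ} {j i : Fin n} {C : Finset (Fin k → Fin n)}
    {s : Fin k → Fin n} : Fin.cons i s ∈ embJ j C ↔ i = j ∧ s ∈ C := by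
  rw [mem_embJ, Fin.cons_zero, Fin.tail_cons]

lemma pre_embJ {k : ℕ} (i j : Fin n) (C : Finset (Fin k → Fin n)) :
    pre i (embJ j C) = if i = j then C else ∅ := by
  ext s
  rw [mem_pre, cons_mem_embJ]
  split <;> simp_all

lemma sub_flipSet {k : ℕ} (X : (Fin (k+1) → Fin n) → Bool) (B : Finset (Fin (k+1) → Fin n))
    (i : Fin n) : sub (flipSet X B) i = flipSet (sub X i) (pre i B) := by
  funext s
  simp [sub, flipSet, mem_pre]

lemma iter_succ (k : ℕ) (X : (Fin (k+1) → Fin n) → Bool) :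
    iter f (k+1) X = f (fun i => iter f k (sub X i)) := rfl

lemma pre_disjoint {k : ℕ} {i : Fin n} {B B' : Finset (Fin (k+1) → Fin n)}
    (h : Disjoint B B') : Disjoint (pre i B) (pre i B') := by
  rw [Finset.disjoint_left] at h ⊢
  intro s hs hs'
  exact h (mem_pre.1 hs) (mem_pre.1 hs')

lemma embJ_disjoint {k : ℕ} {j : Fin n} {C C' : Finset (Fin k → Fin n)}
    (h : Disjoint C C') : Disjoint (embJ j C) (embJ j C') := by
  rw [Finset.disjoint_left] at h ⊢
  intro q hq hq'
  exact h (mem_embJ.1 hq).2 (mem_embJ.1 hq').2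

lemma isBlock_iter_exists {k : ℕ} {X : (Fin (k+1) → Fin n) → Bool}
    {B : Finset (Fin (k+1) → Fin n)} (hB : IsBlock (iter f (k+1)) X B) :
    ∃ i, IsBlock (iter f k) (sub X i) (pre i B) := by
  by_contra h
  push_neg at h
  apply hB
  rw [iter_succ, iter_succ]
  congr 1
  funext i
  rw [sub_flipSet]
  exact not_ne_iff.mp (h i)

lemma f_surjective (hm : ¬ Monotone f) (b : Bool) : ∃ p, f p = b := by
  obtain ⟨p, j, h1, h2, h3⟩ := not_monotone_edge hm
  cases b
  · exact ⟨Function.update p j true, by rw [bool_eq_not h3, h1]; rfl⟩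
  · exact ⟨p, h1⟩

lemma iter_surjective (hm : ¬ Monotone f) : ∀ k b, ∃ z, iter f k z = b := by
  intro k
  induction k with
  | zero => intro b; exact ⟨fun _ => b, rfl⟩
  | succ k ih =>
    intro b
    obtain ⟨p, hp⟩ := f_surjective hm b
    choose z hz using fun i => ih (p i)
    refine ⟨fun q => z (q 0) (Fin.tail q), ?_⟩
    rw [iter_succ]
    have : (fun i => iter f k (sub (fun q => z (q 0) (Fin.tail q)) i)) = p := by
      funext i
      have hsub : sub (n := n) (fun q => z (q 0) (Fin.tail q)) i = z i := by
        funext s; simp [sub]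
      rw [hsub, hz]
    rw [this, hp]

end BSAux4

namespace BSAux5
open BS Finset BSAux BSAux2 BSAux3 BSAux4
set_option linter.unusedSectionVars false

variable {n : ℕ} {f : (Fin n → Bool) → Bool}

lemma key_embed (hm : ¬ Monotone f) (ha : ¬ Antitone f) (k : ℕ)
    (z : (Fin k → Fin n) → Bool) (b : Bool) :
    ∃ (X : (Fin (k+1) → Fin n) → Bool) (j : Fin n),
      iter f (k+1) X = b ∧
      ∀ C, IsBlock (iter f k) z C → IsBlock (iter f (k+1)) X (embJ j C) := by
  obtain ⟨p, j, hfp, hpj, hblk⟩ := edge4 hm ha b (iter f k z)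
  choose Z0 hZ0 using fun i => iter_surjective hm k (p i)
  set Z : Fin n → (Fin k → Fin n) → Bool := Function.update Z0 j z with hZdef
  have hZj : Z j = z := by simp [hZdef]
  have hZ : ∀ i, iter f k (Z i) = p i := by
    intro i
    by_cases hij : i = j
    · subst hij; rw [hZj, ← hpj]
    · rw [hZdef, Function.update_of_ne hij]; exact hZ0 i
  set X : (Fin (k+1) → Fin n) → Bool := fun q => Z (q 0) (Fin.tail q) with hXdef
  have hsub : ∀ i, sub X i = Z i := by
    intro i; funext s; simp [hXdef, sub]
  have hHX : iter f (k+1) X = f p := by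
    rw [iter_succ]
    congr 1
    funext i
    rw [hsub, hZ]
  refine ⟨X, j, by rw [hHX, hfp], ?_⟩
  intro C hC
  rw [IsBlock, iter_succ, hHX]
  have houter : (fun i => iter f k (sub (flipSet X (embJ j C)) i)) = flipSet p {j} := by
    funext i
    rw [sub_flipSet, pre_embJ, hsub]
    by_cases hij : i = j
    · subst hij
      rw [if_pos rfl, hZj]
      have hne : iter f k (flipSet z C) ≠ iter f k z := hC
      rw [bool_eq_not hne, flipSet_singleton_apply, hpj]
    · rw [if_neg hij, flipSet_empty, hZ]
      simp [flipSet, hij]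
  rw [houter]
  exact hblk

end BSAux5

namespace BSAux6
open BS Finset BSAux BSAux2 BSAux3 BSAux4 BSAux5
set_option linter.unusedSectionVars false

variable {n : ℕ} {f : (Fin n → Bool) → Bool}

lemma bsAt_iter_le (k : ℕ) (X : (Fin (k+1) → Fin n) → Bool) :
    bsAt (iter f (k+1)) X ≤ n * bs (iter f k) := by
  apply bsAt_le
  rintro m ⟨B, hB, hdisj⟩
  choose φ hφ using fun t => isBlock_iter_exists (f := f) (hB t)
  have hcount : m = ∑ i : Fin n, (univ.filter fun t => φ t = i).card := by
    have h := Finset.card_eq_sum_card_fiberwise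
      (f := φ) (s := (univ : Finset (Fin m))) (t := univ) (fun t _ => mem_univ _)
    simpa using h
  have hfiber : ∀ i : Fin n, (univ.filter fun t => φ t = i).card ≤ bs (iter f k) := by
    intro i
    refine le_trans ?_ (bsAt_le_bs (f := iter f k) (sub X i))
    apply le_bsAt
    refine ⟨fun a => pre i (B (((univ.filter fun t : Fin m => φ t = i).equivFin.symm a)).1), ?_, ?_⟩
    · intro a
      have hmem : φ (((univ.filter fun t : Fin m => φ t = i).equivFin.symm a)).1 = i :=
        (mem_filter.1 ((univ.filter fun t : Fin m => φ t = i).equivFin.symm a).2).2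
      have h := hφ (((univ.filter fun t : Fin m => φ t = i).equivFin.symm a)).1
      rwa [hmem] at h
    · intro a a' haa
      exact pre_disjoint
        (hdisj _ _ fun h => haa ((univ.filter fun t : Fin m => φ t = i).equivFin.symm.injective (Subtype.ext h)))
  rw [hcount]
  calc ∑ i : Fin n, (univ.filter fun t => φ t = i).card
      ≤ ∑ _i : Fin n, bs (iter f k) := Finset.sum_le_sum fun i _ => hfiber i
    _ = n * bs (iter f k) := by
        simp [Finset.sum_const, Finset.card_univ]

lemma fbsAt_iter_le (hne : Nonempty (Fin n)) (k : ℕ) (X : (Fin (k+1) → Fin n) → Bool) :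
    fbsAt (iter f (k+1)) X ≤ (n : ℝ) * fbs (iter f k) := by
  classical
  apply fbsAt_le
  rintro s ⟨lam, hnn, hz0, hcap, rfl⟩
  have hchoice : ∀ B : Finset (Fin (k+1) → Fin n), ∃ i,
      IsBlock (iter f (k+1)) X B → IsBlock (iter f k) (sub X i) (pre i B) := by
    intro B
    by_cases h : IsBlock (iter f (k+1)) X B
    · obtain ⟨i, hi⟩ := isBlock_iter_exists h
      exact ⟨i, fun _ => hi⟩
    · exact ⟨Classical.arbitrary _, fun h' => absurd h' h⟩
  choose φ hφ using hchoice
  set S : Fin n → Finset (Finset (Fin (k+1) → Fin n)) :=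
    fun i => univ.filter fun B => IsBlock (iter f (k+1)) X B ∧ φ B = i with hS
  set lam' : Fin n → Finset (Fin k → Fin n) → ℝ :=
    fun i C => ∑ B ∈ (S i).filter (fun B => pre i B = C), lam B with hlam'
  have hmem : ∀ i, (∑ C : Finset (Fin k → Fin n), lam' i C) ∈ fbsSet (iter f k) (sub X i) := by
    intro i
    refine ⟨lam' i, ?_, ?_, ?_, rfl⟩
    · intro C
      exact Finset.sum_nonneg fun B _ => hnn B
    · intro C hC
      apply Finset.sum_eq_zero
      intro B hB
      obtain ⟨hB1, hB2⟩ := mem_filter.1 hB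
      rw [hS] at hB1
      simp only [mem_filter, mem_univ, true_and] at hB1
      exfalso
      apply hC
      have h := hφ B hB1.1
      rw [hB1.2] at h
      rwa [hB2] at h
    · intro j'
      have heq : ∑ C ∈ univ.filter (fun C : Finset (Fin k → Fin n) => j' ∈ C), lam' i C
          = ∑ B ∈ (S i).filter
              (fun B => pre i B ∈ univ.filter (fun C : Finset (Fin k → Fin n) => j' ∈ C)), lam B :=
        Finset.sum_fiberwise_eq_sum_filter _ _ _ _
      rw [heq]
      refine le_trans (Finset.sum_le_sum_of_subset_of_nonneg ?_ fun B _ _ => hnn B)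
        (hcap (Fin.cons i j'))
      intro B hB
      rw [mem_filter] at hB
      rw [mem_filter]
      refine ⟨mem_univ _, ?_⟩
      have h := hB.2
      rw [mem_filter] at h
      exact mem_pre.1 h.2
  have htot : ∀ i, (∑ C : Finset (Fin k → Fin n), lam' i C) = ∑ B ∈ S i, lam B := by
    intro i
    exact Finset.sum_fiberwise (S i) (pre i) lam
  have hsplit : ∑ B : Finset (Fin (k+1) → Fin n), lam B = ∑ i : Fin n, ∑ B ∈ S i, lam B := by
    have h1 : ∀ i, S i
        = (univ.filter fun B => IsBlock (iter f (k+1)) X B).filter (fun B => φ B = i) := by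
      intro i
      rw [hS]
      rw [Finset.filter_filter]
    calc ∑ B : Finset (Fin (k+1) → Fin n), lam B
        = ∑ B ∈ univ.filter (fun B => IsBlock (iter f (k+1)) X B), lam B := by
          symm
          apply Finset.sum_subset (Finset.filter_subset _ _)
          intro B _ hB
          rw [mem_filter] at hB
          push_neg at hB
          exact hz0 B (hB (mem_univ _))
      _ = ∑ i : Fin n, ∑ B ∈ (univ.filter fun B => IsBlock (iter f (k+1)) X B).filter
            (fun B => φ B = i), lam B := (Finset.sum_fiberwise _ _ _).symm
      _ = ∑ i : Fin n, ∑ B ∈ S i, lam B := by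
          apply Finset.sum_congr rfl
          intro i _
          rw [h1]
  calc ∑ B : Finset (Fin (k+1) → Fin n), lam B
      = ∑ i : Fin n, ∑ C : Finset (Fin k → Fin n), lam' i C := by
        rw [hsplit]
        exact Finset.sum_congr rfl fun i _ => (htot i).symm
    _ ≤ ∑ _i : Fin n, fbs (iter f k) :=
        Finset.sum_le_sum fun i _ => le_trans (le_fbsAt (hmem i)) (fbsAt_le_fbs _)
    _ = (n : ℝ) * fbs (iter f k) := by
        simp [Finset.sum_const, Finset.card_univ]

lemma bs_lower (hm : ¬ Monotone f) (ha : ¬ Antitone f) (k : ℕ) (b : Bool) :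
    bs (iter f k) ≤ bsb (iter f (k+1)) b := by
  apply csSup_le'
  rintro m ⟨z, rfl⟩
  obtain ⟨X, j, hXb, hemb⟩ := key_embed hm ha k z b
  refine le_trans (bsAt_le ?_) (bsAt_le_bsb hXb)
  rintro m' ⟨C, hC, hd⟩
  exact le_bsAt ⟨fun t => embJ j (C t), fun t => hemb _ (hC t),
    fun t t' h => embJ_disjoint (hd t t' h)⟩

lemma fbs_lower (hm : ¬ Monotone f) (ha : ¬ Antitone f) (k : ℕ) (b : Bool) :
    fbs (iter f k) ≤ fbsb (iter f (k+1)) b := by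
  apply fbs_le
  intro z
  obtain ⟨X, j, hXb, hemb⟩ := key_embed hm ha k z b
  refine le_trans (fbsAt_le ?_) (fbsAt_le_fbsb hXb)
  rintro s ⟨lam, hnn, hz0, hcap, rfl⟩
  apply le_fbsAt
  classical
  refine ⟨fun B => ∑ C ∈ univ.filter (fun C => embJ j C = B), lam C, ?_, ?_, ?_, ?_⟩
  · intro B
    exact Finset.sum_nonneg fun C _ => hnn C
  · intro B hB
    apply Finset.sum_eq_zero
    intro C hC
    rw [mem_filter] at hC
    by_cases h : IsBlock (iter f k) z C
    · exact absurd (hC.2 ▸ hemb C h) hB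
    · exact hz0 C h
  · intro q
    rw [Finset.sum_fiberwise_eq_sum_filter]
    by_cases hq : q 0 = j
    · have heq : univ.filter (fun C : Finset (Fin k → Fin n) =>
          embJ j C ∈ univ.filter (fun B => q ∈ B))
          = univ.filter (fun C => Fin.tail q ∈ C) := by
        apply Finset.filter_congr
        intro C _
        simp [mem_embJ, hq]
      rw [heq]
      exact hcap (Fin.tail q)
    · have heq : univ.filter (fun C : Finset (Fin k → Fin n) =>
          embJ j C ∈ univ.filter (fun B => q ∈ B)) = ∅ := by
        ext C
        simp [mem_embJ, hq]
      rw [heq]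
      simp
  · exact (Finset.sum_fiberwise univ (embJ j) lam).symm

end BSAux6

namespace BSAux7
open BS BSAux BSAux2 BSAux3 BSAux4 BSAux5 BSAux6

theorem main {n : ℕ} (f : (Fin n → Bool) → Bool)
    (hmono : ¬ Monotone f) (hanti : ¬ Antitone f) :
    (∀ k : ℕ, ∀ b : Bool,
        bs (iter f k) ≤ bsb (iter f (k + 1)) b ∧
        bsb (iter f (k + 1)) b ≤ n * bs (iter f k) ∧
        fbs (iter f k) ≤ fbsb (iter f (k + 1)) b ∧
        fbsb (iter f (k + 1)) b ≤ n * fbs (iter f k)) ∧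
      (∀ k : ℕ, 1 ≤ k →
        bs (iter f k) ≤ n * min (bsb (iter f k) false) (bsb (iter f k) true) ∧
        fbs (iter f k) ≤ n * min (fbsb (iter f k) false) (fbsb (iter f k) true)) := by
  have hne : Nonempty (Fin n) := by
    obtain ⟨p, j, _, _, _⟩ := not_monotone_edge hmono
    exact ⟨j⟩
  have upper_bs : ∀ k b, bsb (iter f (k+1)) b ≤ n * bs (iter f k) :=
    fun k _ => bsb_le fun X _ => bsAt_iter_le k X
  have upper_fbs : ∀ k b, fbsb (iter f (k+1)) b ≤ (n : ℝ) * fbs (iter f k) :=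
    fun k _ => fbsb_le (mul_nonneg (Nat.cast_nonneg n) fbs_nonneg)
      fun X _ => fbsAt_iter_le hne k X
  refine ⟨fun k b => ⟨bs_lower hmono hanti k b, upper_bs k b,
    fbs_lower hmono hanti k b, upper_fbs k b⟩, ?_⟩
  intro k hk
  obtain ⟨k', rfl⟩ : ∃ k', k = k' + 1 := ⟨k - 1, by omega⟩
  constructor
  · apply csSup_le'
    rintro m ⟨x, rfl⟩
    calc bsAt (iter f (k'+1)) x
        ≤ bsb (iter f (k'+1)) (iter f (k'+1) x) := bsAt_le_bsb rfl
      _ ≤ n * bs (iter f k') := upper_bs k' _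
      _ ≤ n * min (bsb (iter f (k'+1)) false) (bsb (iter f (k'+1)) true) :=
          Nat.mul_le_mul_left n
            (le_min (bs_lower hmono hanti k' false) (bs_lower hmono hanti k' true))
  · have hminnn : 0 ≤ min (fbsb (iter f (k'+1)) false) (fbsb (iter f (k'+1)) true) := by
      obtain ⟨z0, hz0⟩ := iter_surjective hmono (k'+1) false
      obtain ⟨z1, hz1⟩ := iter_surjective hmono (k'+1) true
      exact le_min (fbsb_nonneg hz0) (fbsb_nonneg hz1)
    apply Real.sSup_le
    · rintro s ⟨x, rfl⟩
      calc fbsAt (iter f (k'+1)) x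
          ≤ fbsb (iter f (k'+1)) (iter f (k'+1) x) := fbsAt_le_fbsb rfl
        _ ≤ (n : ℝ) * fbs (iter f k') := upper_fbs k' _
        _ ≤ (n : ℝ) * min (fbsb (iter f (k'+1)) false) (fbsb (iter f (k'+1)) true) :=
            mul_le_mul_of_nonneg_left
              (le_min (fbs_lower hmono hanti k' false) (fbs_lower hmono hanti k' true))
              (Nat.cast_nonneg n)
    · exact mul_nonneg (Nat.cast_nonneg n) hminnn

end BSAux7


open BS in
/-- Let `f` be an `n`-variate boolean function that is neither
monotone nor antimonotone.  Then for all `k ≥ 0` and `b ∈ {0,1}`: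
`bs(f^(k)) ≤ bs_b(f^(k+1)) ≤ n·bs(f^(k))`, and likewise for the fractional block
sensitivity.  In particular, for `k ≥ 1`,
`bs(f^(k)) ≤ n · min{bs_0(f^(k)), bs_1(f^(k))}`, and similarly fractionally. -/
theorem bs_levels_comparison {n : ℕ} (f : (Fin n → Bool) → Bool)
    (hmono : ¬ Monotone f) (hanti : ¬ Antitone f) :
    (∀ k : ℕ, ∀ b : Bool,
        bs (iter f k) ≤ bsb (iter f (k + 1)) b ∧
        bsb (iter f (k + 1)) b ≤ n * bs (iter f k) ∧
        fbs (iter f k) ≤ fbsb (iter f (k + 1)) b ∧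
        fbsb (iter f (k + 1)) b ≤ n * fbs (iter f k)) ∧
      (∀ k : ℕ, 1 ≤ k →
        bs (iter f k) ≤ n * min (bsb (iter f k) false) (bsb (iter f k) true) ∧
        fbs (iter f k) ≤ n * min (fbsb (iter f k) false) (fbsb (iter f k) true)) := by
  exact BSAux7.main f hmono hanti
end

section
/- Let g be a non-constant boolean function on m variables and let f := OR_n ∘ g be the composition of the n-bit OR function with g (a boolean function on nm variables). Then C_1(f) = C_1(g), bs_1(f) = bs_1(g), bs*_1(f) = bs*_1(g), and C_0(f) = n · C_0(g), bs_0(f) = n · bs_0(g), bs*_0(f) = n · bs*_0(g). -/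
open Filter

namespace BS

/-- The `n`-bit OR function. -/
def ORn (n : ℕ) : (Fin n → Bool) → Bool :=
  fun x => decide (∃ i, x i = true)

end BS

set_option linter.unusedSectionVars false

namespace BS

variable {I : Type*} [Fintype I] [DecidableEq I]

theorem flipSet_empty (x : I → Bool) : flipSet x ∅ = x := by
  funext i; simp [flipSet]

theorem not_isBlock_empty (f : (I → Bool) → Bool) (x : I → Bool) : ¬ IsBlock f x ∅ := by
  simp [IsBlock, flipSet_empty]

theorem IsBlock.nonempty {f : (I → Bool) → Bool} {x : I → Bool} {B : Finset I}
    (h : IsBlock f x B) : B.Nonempty := by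
  rcases B.eq_empty_or_nonempty with rfl | h'
  · exact absurd h (not_isBlock_empty f x)
  · exact h'

/-! ### bsAt API -/

theorem bsAt_mem_le {f : (I → Bool) → Bool} {x : I → Bool} {k : ℕ}
    (hk : k ∈ {k | ∃ B : Fin k → Finset I, (∀ t, IsBlock f x (B t)) ∧
      ∀ t t', t ≠ t' → Disjoint (B t) (B t')}) : k ≤ Fintype.card I := by
  obtain ⟨B, hB, hd⟩ := hk
  have hne : ∀ t, (B t).Nonempty := fun t => (hB t).nonempty
  choose e he using hne
  have hinj : Function.Injective e := by
    intro t t' h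
    by_contra hne'
    exact (Finset.disjoint_left.mp (hd t t' hne')) (he t) (h ▸ he t')
  simpa using Fintype.card_le_of_injective e hinj

theorem bsAt_set_nonempty (f : (I → Bool) → Bool) (x : I → Bool) :
    Set.Nonempty {k | ∃ B : Fin k → Finset I, (∀ t, IsBlock f x (B t)) ∧
      ∀ t t', t ≠ t' → Disjoint (B t) (B t')} :=
  ⟨0, Fin.elim0, fun t => t.elim0, fun t _ _ => t.elim0⟩

theorem bsAt_set_bddAbove (f : (I → Bool) → Bool) (x : I → Bool) :
    BddAbove {k | ∃ B : Fin k → Finset I, (∀ t, IsBlock f x (B t)) ∧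
      ∀ t t', t ≠ t' → Disjoint (B t) (B t')} :=
  ⟨Fintype.card I, fun _ hk => bsAt_mem_le hk⟩

theorem le_bsAt {f : (I → Bool) → Bool} {x : I → Bool} {k : ℕ} (B : Fin k → Finset I)
    (hB : ∀ t, IsBlock f x (B t)) (hd : ∀ t t', t ≠ t' → Disjoint (B t) (B t')) :
    k ≤ bsAt f x :=
  le_csSup (bsAt_set_bddAbove f x) ⟨B, hB, hd⟩

theorem bsAt_le {f : (I → Bool) → Bool} {x : I → Bool} {c : ℕ}
    (h : ∀ (k : ℕ) (B : Fin k → Finset I), (∀ t, IsBlock f x (B t)) →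
      (∀ t t', t ≠ t' → Disjoint (B t) (B t')) → k ≤ c) : bsAt f x ≤ c :=
  csSup_le (bsAt_set_nonempty f x) (fun _ ⟨B, h1, h2⟩ => h _ B h1 h2)

theorem bsAt_le_card (f : (I → Bool) → Bool) (x : I → Bool) :
    bsAt f x ≤ Fintype.card I :=
  csSup_le (bsAt_set_nonempty f x) (fun _ hk => bsAt_mem_le hk)

theorem exists_bsAt_family (f : (I → Bool) → Bool) (x : I → Bool) :
    ∃ B : Fin (bsAt f x) → Finset I, (∀ t, IsBlock f x (B t)) ∧
      ∀ t t', t ≠ t' → Disjoint (B t) (B t') :=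
  Nat.sSup_mem (bsAt_set_nonempty f x) (bsAt_set_bddAbove f x)

theorem le_bsb {f : (I → Bool) → Bool} {x : I → Bool} {b : Bool} (hx : f x = b) :
    bsAt f x ≤ bsb f b :=
  le_csSup ⟨Fintype.card I, fun _ ⟨x', _, hk⟩ => hk ▸ bsAt_le_card f x'⟩ ⟨x, hx, rfl⟩

theorem bsb_le {f : (I → Bool) → Bool} {b : Bool} {c : ℕ} (hne : ∃ x, f x = b)
    (h : ∀ x, f x = b → bsAt f x ≤ c) : bsb f b ≤ c := by
  obtain ⟨x0, hx0⟩ := hne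
  exact csSup_le ⟨bsAt f x0, x0, hx0, rfl⟩ (fun _ ⟨x, hx, hk⟩ => hk ▸ h x hx)

theorem exists_bsb {f : (I → Bool) → Bool} {b : Bool} (hne : ∃ x, f x = b) :
    ∃ x, f x = b ∧ bsb f b = bsAt f x := by
  obtain ⟨x0, hx0⟩ := hne
  have h : bsb f b ∈ {k | ∃ x, f x = b ∧ k = bsAt f x} :=
    Nat.sSup_mem ⟨bsAt f x0, x0, hx0, rfl⟩
      ⟨Fintype.card I, fun _ ⟨x', _, hk⟩ => hk ▸ bsAt_le_card f x'⟩
  exact h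

/-! ### CAt API -/

def IsCert (f : (I → Bool) → Bool) (x : I → Bool) (S : Finset I) : Prop :=
  ∀ B, IsBlock f x B → (S ∩ B).Nonempty

theorem isCert_univ (f : (I → Bool) → Bool) (x : I → Bool) :
    IsCert f x (Finset.univ) := by
  intro B hB
  simpa [Finset.univ_inter] using hB.nonempty

theorem CAt_le {f : (I → Bool) → Bool} {x : I → Bool} {S : Finset I}
    (h : IsCert f x S) : CAt f x ≤ S.card :=
  Nat.sInf_le ⟨S, h, rfl⟩

theorem CAt_le_card (f : (I → Bool) → Bool) (x : I → Bool) :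
    CAt f x ≤ Fintype.card I := by
  simpa using CAt_le (isCert_univ f x)

theorem exists_CAt (f : (I → Bool) → Bool) (x : I → Bool) :
    ∃ S : Finset I, IsCert f x S ∧ S.card = CAt f x := by
  have h := Nat.sInf_mem (⟨Finset.univ.card, Finset.univ, isCert_univ f x, rfl⟩ :
    Set.Nonempty {k | ∃ S : Finset I, (∀ B, IsBlock f x B → (S ∩ B).Nonempty) ∧ k = S.card})
  obtain ⟨S, hS, hcard⟩ := h
  exact ⟨S, hS, hcard.symm⟩

theorem le_Cb {f : (I → Bool) → Bool} {x : I → Bool} {b : Bool} (hx : f x = b) :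
    CAt f x ≤ Cb f b :=
  le_csSup ⟨Fintype.card I, fun _ ⟨x', _, hk⟩ => hk ▸ CAt_le_card f x'⟩ ⟨x, hx, rfl⟩

theorem Cb_le {f : (I → Bool) → Bool} {b : Bool} {c : ℕ} (hne : ∃ x, f x = b)
    (h : ∀ x, f x = b → CAt f x ≤ c) : Cb f b ≤ c := by
  obtain ⟨x0, hx0⟩ := hne
  exact csSup_le ⟨CAt f x0, x0, hx0, rfl⟩ (fun _ ⟨x, hx, hk⟩ => hk ▸ h x hx)

theorem exists_Cb {f : (I → Bool) → Bool} {b : Bool} (hne : ∃ x, f x = b) :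
    ∃ x, f x = b ∧ Cb f b = CAt f x := by
  obtain ⟨x0, hx0⟩ := hne
  have h : Cb f b ∈ {k | ∃ x, f x = b ∧ k = CAt f x} :=
    Nat.sSup_mem ⟨CAt f x0, x0, hx0, rfl⟩
      ⟨Fintype.card I, fun _ ⟨x', _, hk⟩ => hk ▸ CAt_le_card f x'⟩
  exact h

/-! ### fbsAt API -/

def Feasible (f : (I → Bool) → Bool) (x : I → Bool) (lam : Finset I → ℝ) : Prop :=
  (∀ B, 0 ≤ lam B) ∧ (∀ B, ¬ IsBlock f x B → lam B = 0) ∧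
    (∀ i : I, ∑ B ∈ Finset.univ.filter (fun B : Finset I => i ∈ B), lam B ≤ 1)

theorem Feasible.sum_le_card {f : (I → Bool) → Bool} {x : I → Bool} {lam : Finset I → ℝ}
    (h : Feasible f x lam) : ∑ B : Finset I, lam B ≤ Fintype.card I := by
  obtain ⟨h0, hsupp, hcon⟩ := h
  calc ∑ B : Finset I, lam B ≤ ∑ B : Finset I, ∑ _i ∈ B, lam B := by
        refine Finset.sum_le_sum (fun B _ => ?_)
        rcases eq_or_ne (lam B) 0 with hB | hB
        · simp [hB]
        · have hne : B.Nonempty := IsBlock.nonempty (f := f) (x := x) (by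
            by_contra hc; exact hB (hsupp B hc))
          have : (1 : ℝ) ≤ B.card := by
            exact_mod_cast Nat.one_le_iff_ne_zero.mpr (Finset.card_ne_zero_of_mem hne.choose_spec)
          calc lam B = 1 * lam B := (one_mul _).symm
            _ ≤ B.card * lam B := mul_le_mul_of_nonneg_right this (h0 B)
            _ = ∑ _i ∈ B, lam B := by rw [Finset.sum_const, nsmul_eq_mul]
    _ = ∑ B : Finset I, ∑ i : I, if i ∈ B then lam B else 0 := by
        refine Finset.sum_congr rfl (fun B _ => ?_)
        rw [Finset.sum_ite_mem, Finset.univ_inter]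
    _ = ∑ i : I, ∑ B ∈ Finset.univ.filter (fun B : Finset I => i ∈ B), lam B := by
        rw [Finset.sum_comm]
        exact Finset.sum_congr rfl (fun i _ => (Finset.sum_filter _ _).symm)
    _ ≤ ∑ _i : I, (1 : ℝ) := Finset.sum_le_sum (fun i _ => hcon i)
    _ = Fintype.card I := by simp

theorem feasible_zero (f : (I → Bool) → Bool) (x : I → Bool) :
    Feasible f x (fun _ => 0) :=
  ⟨fun _ => le_refl 0, fun _ _ => rfl, fun i => by simp⟩

theorem fbsAt_set_nonempty (f : (I → Bool) → Bool) (x : I → Bool) :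
    Set.Nonempty {s | ∃ lam : Finset I → ℝ, (∀ B, 0 ≤ lam B) ∧
      (∀ B, ¬ IsBlock f x B → lam B = 0) ∧
      (∀ i : I, ∑ B ∈ Finset.univ.filter (fun B : Finset I => i ∈ B), lam B ≤ 1) ∧
      s = ∑ B : Finset I, lam B} :=
  ⟨0, fun _ => 0, fun _ => le_refl 0, fun _ _ => rfl, fun i => by simp, by simp⟩

theorem fbsAt_set_bddAbove (f : (I → Bool) → Bool) (x : I → Bool) :
    BddAbove {s | ∃ lam : Finset I → ℝ, (∀ B, 0 ≤ lam B) ∧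
      (∀ B, ¬ IsBlock f x B → lam B = 0) ∧
      (∀ i : I, ∑ B ∈ Finset.univ.filter (fun B : Finset I => i ∈ B), lam B ≤ 1) ∧
      s = ∑ B : Finset I, lam B} := by
  refine ⟨Fintype.card I, fun s hs => ?_⟩
  obtain ⟨lam, h0, h1, h2, rfl⟩ := hs
  exact Feasible.sum_le_card ⟨h0, h1, h2⟩

theorem le_fbsAt {f : (I → Bool) → Bool} {x : I → Bool} {lam : Finset I → ℝ}
    (h : Feasible f x lam) : ∑ B : Finset I, lam B ≤ fbsAt f x :=
  le_csSup (fbsAt_set_bddAbove f x) ⟨lam, h.1, h.2.1, h.2.2, rfl⟩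

theorem fbsAt_le {f : (I → Bool) → Bool} {x : I → Bool} {c : ℝ}
    (h : ∀ lam : Finset I → ℝ, Feasible f x lam → ∑ B : Finset I, lam B ≤ c) :
    fbsAt f x ≤ c := by
  refine csSup_le (fbsAt_set_nonempty f x) ?_
  rintro s ⟨lam, h0, h1, h2, rfl⟩
  exact h lam ⟨h0, h1, h2⟩

theorem fbsAt_le_card (f : (I → Bool) → Bool) (x : I → Bool) :
    fbsAt f x ≤ Fintype.card I :=
  fbsAt_le (fun _ h => h.sum_le_card)

theorem le_fbsb {f : (I → Bool) → Bool} {x : I → Bool} {b : Bool} (hx : f x = b) :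
    fbsAt f x ≤ fbsb f b :=
  le_csSup ⟨Fintype.card I, fun _ ⟨x', _, hk⟩ => hk ▸ fbsAt_le_card f x'⟩ ⟨x, hx, rfl⟩

theorem fbsb_le {f : (I → Bool) → Bool} {b : Bool} {c : ℝ} (hne : ∃ x, f x = b)
    (h : ∀ x, f x = b → fbsAt f x ≤ c) : fbsb f b ≤ c := by
  obtain ⟨x0, hx0⟩ := hne
  exact csSup_le ⟨fbsAt f x0, x0, hx0, rfl⟩ (fun _ ⟨x, hx, hk⟩ => hk ▸ h x hx)

end BS
namespace BS

variable {n m : ℕ}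

/-- Embed a set of column indices into row `i`. -/
def emb (i : Fin n) (A : Finset (Fin m)) : Finset (Fin n × Fin m) :=
  A.image (fun j => (i, j))

/-- The columns of `B` in row `i`. -/
def row (i : Fin n) (B : Finset (Fin n × Fin m)) : Finset (Fin m) :=
  Finset.univ.filter (fun j => (i, j) ∈ B)

/-- Row `i` of an input `x`. -/
def xrow (x : Fin n × Fin m → Bool) (i : Fin n) : Fin m → Bool :=
  fun j => x (i, j)

@[simp] theorem mem_emb {i : Fin n} {A : Finset (Fin m)} {p : Fin n × Fin m} :
    p ∈ emb i A ↔ p.1 = i ∧ p.2 ∈ A := by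
  unfold emb
  rw [Finset.mem_image]
  constructor
  · rintro ⟨j, hj, rfl⟩; exact ⟨rfl, hj⟩
  · rintro ⟨h1, h2⟩; exact ⟨p.2, h2, by rw [← h1]⟩

@[simp] theorem mem_row {i : Fin n} {j : Fin m} {B : Finset (Fin n × Fin m)} :
    j ∈ row i B ↔ (i, j) ∈ B := by simp [row]

@[simp] theorem row_emb (i : Fin n) (A : Finset (Fin m)) : row i (emb i A) = A := by
  ext j; simp

theorem emb_row_filter (i : Fin n) (B : Finset (Fin n × Fin m)) :
    emb i (row i B) = B.filter (fun p => p.1 = i) := by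
  ext ⟨a, b⟩
  simp only [mem_emb, mem_row, Finset.mem_filter, Finset.mem_univ, true_and]
  constructor
  · rintro ⟨rfl, h⟩; exact ⟨h, rfl⟩
  · rintro ⟨h, rfl⟩; exact ⟨rfl, h⟩

theorem card_emb (i : Fin n) (A : Finset (Fin m)) : (emb i A).card = A.card := by
  unfold emb
  rw [Finset.card_image_of_injective]
  intro a b h
  simpa using h

theorem emb_injective (i : Fin n) :
    Function.Injective (emb i : Finset (Fin m) → Finset (Fin n × Fin m)) := by
  intro A A' h
  rw [← row_emb i A, ← row_emb i A', h]

theorem disjoint_emb_ne {i i' : Fin n} (h : i ≠ i') (A A' : Finset (Fin m)) :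
    Disjoint (emb i A) (emb i' A') := by
  rw [Finset.disjoint_left]
  intro p hp hp'
  rw [mem_emb] at hp hp'
  exact h (hp.1 ▸ hp'.1)

theorem disjoint_emb_of {i : Fin n} {A A' : Finset (Fin m)} (h : Disjoint A A') :
    Disjoint (emb i A) (emb i A') := by
  rw [Finset.disjoint_left] at h ⊢
  intro p hp hp'
  rw [mem_emb] at hp hp'
  exact h hp.2 hp'.2

theorem disjoint_row_of {i : Fin n} {B B' : Finset (Fin n × Fin m)} (h : Disjoint B B') :
    Disjoint (row i B) (row i B') := by
  rw [Finset.disjoint_left] at h ⊢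
  intro j hj hj'
  rw [mem_row] at hj hj'
  exact h hj hj'

theorem xrow_flip (x : Fin n × Fin m → Bool) (B : Finset (Fin n × Fin m)) (i : Fin n) :
    xrow (flipSet x B) i = flipSet (xrow x i) (row i B) := by
  funext j; simp [xrow, flipSet]

theorem row_emb_ne {i i' : Fin n} (h : i' ≠ i) (A : Finset (Fin m)) :
    row i' (emb i A) = ∅ := by
  ext j; simp [h]

theorem xrow_flip_emb_ne {x : Fin n × Fin m → Bool} {i i' : Fin n} (h : i' ≠ i)
    (A : Finset (Fin m)) : xrow (flipSet x (emb i A)) i' = xrow x i' := by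
  rw [xrow_flip, row_emb_ne h, flipSet_empty]

variable {g : (Fin m → Bool) → Bool}

theorem comp_true {x : Fin n × Fin m → Bool} :
    comp (ORn n) g x = true ↔ ∃ i, g (xrow x i) = true := by
  show decide (∃ i, g (xrow x i) = true) = true ↔ _
  simp

theorem comp_false {x : Fin n × Fin m → Bool} :
    comp (ORn n) g x = false ↔ ∀ i, g (xrow x i) = false := by
  show decide (∃ i, g (xrow x i) = true) = false ↔ _
  simp

theorem block_row_true {x : Fin n × Fin m → Bool} {i : Fin n} (hi : g (xrow x i) = true)
    {B : Finset (Fin n × Fin m)} (hB : IsBlock (comp (ORn n) g) x B) :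
    IsBlock g (xrow x i) (row i B) := by
  have hfx : comp (ORn n) g x = true := comp_true.mpr ⟨i, hi⟩
  have hflip : comp (ORn n) g (flipSet x B) = false := by
    cases h : comp (ORn n) g (flipSet x B)
    · rfl
    · exact absurd (h.trans hfx.symm) hB
  have h2 := comp_false.mp hflip i
  rw [xrow_flip] at h2
  simp [IsBlock, h2, hi]

theorem block_exists_row_false {x : Fin n × Fin m → Bool} (hx : ∀ i, g (xrow x i) = false)
    {B : Finset (Fin n × Fin m)} (hB : IsBlock (comp (ORn n) g) x B) :
    ∃ i : Fin n, IsBlock g (xrow x i) (row i B) := by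
  have hfx : comp (ORn n) g x = false := comp_false.mpr hx
  have hflip : comp (ORn n) g (flipSet x B) = true := by
    cases h : comp (ORn n) g (flipSet x B)
    · exact absurd (h.trans hfx.symm) hB
    · rfl
  obtain ⟨i, hi⟩ := comp_true.mp hflip
  rw [xrow_flip] at hi
  exact ⟨i, by simp [IsBlock, hi, hx i]⟩

theorem block_emb_false {x : Fin n × Fin m → Bool} (hx : ∀ i, g (xrow x i) = false)
    {i : Fin n} {A : Finset (Fin m)} (hA : IsBlock g (xrow x i) A) :
    IsBlock (comp (ORn n) g) x (emb i A) := by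
  have h1 : g (xrow (flipSet x (emb i A)) i) = true := by
    rw [xrow_flip, row_emb]
    cases h : g (flipSet (xrow x i) A)
    · exact absurd (h.trans (hx i).symm) hA
    · rfl
  have h2 : comp (ORn n) g (flipSet x (emb i A)) = true := comp_true.mpr ⟨i, h1⟩
  simp [IsBlock, h2, comp_false.mpr hx]

theorem block_emb_true {x : Fin n × Fin m → Bool} {i0 : Fin n}
    (hi0 : g (xrow x i0) = true) (hoth : ∀ i, i ≠ i0 → g (xrow x i) = false)
    {A : Finset (Fin m)} (hA : IsBlock g (xrow x i0) A) :
    IsBlock (comp (ORn n) g) x (emb i0 A) := by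
  have hfx : comp (ORn n) g x = true := comp_true.mpr ⟨i0, hi0⟩
  have hflip : comp (ORn n) g (flipSet x (emb i0 A)) = false := by
    rw [comp_false]
    intro i
    rcases eq_or_ne i i0 with rfl | hne
    · rw [xrow_flip, row_emb]
      cases h : g (flipSet (xrow x i) A)
      · rfl
      · exact absurd (h.trans hi0.symm) hA
    · rw [xrow_flip_emb_ne hne, hoth i hne]
  simp [IsBlock, hflip, hfx]

theorem filter_fixed_eq_image (i : Fin n) :
    Finset.univ.filter (fun C : Finset (Fin n × Fin m) => C = emb i (row i C)) =
      Finset.univ.image (emb i) := by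
  ext C
  simp only [Finset.mem_filter, Finset.mem_univ, true_and, Finset.mem_image]
  constructor
  · intro h; exact ⟨row i C, h.symm⟩
  · rintro ⟨A, rfl⟩; rw [row_emb]

theorem filter_fixed_mem_eq_image (i : Fin n) (j : Fin m) :
    Finset.univ.filter (fun C : Finset (Fin n × Fin m) =>
        (i, j) ∈ C ∧ C = emb i (row i C)) =
      (Finset.univ.filter (fun A : Finset (Fin m) => j ∈ A)).image (emb i) := by
  ext C
  simp only [Finset.mem_filter, Finset.mem_univ, true_and, Finset.mem_image]
  constructor
  · rintro ⟨h1, h2⟩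
    exact ⟨row i C, mem_row.mpr h1, h2.symm⟩
  · rintro ⟨A, hA, rfl⟩
    refine ⟨?_, by rw [row_emb]⟩
    rw [mem_emb]; exact ⟨rfl, hA⟩

end BS
namespace BS

variable {n m : ℕ}

/-- All rows equal to `y`. -/
def xall (y : Fin m → Bool) : Fin n × Fin m → Bool := fun p => y p.2

/-- Row `i0` equals `y`, all other rows equal `z`. -/
def xone (i0 : Fin n) (y z : Fin m → Bool) : Fin n × Fin m → Bool :=
  fun p => if p.1 = i0 then y p.2 else z p.2

@[simp] theorem xrow_xall (y : Fin m → Bool) (i : Fin n) : xrow (xall y) i = y := rfl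

theorem xrow_xone_self (i0 : Fin n) (y z : Fin m → Bool) :
    xrow (xone i0 y z) i0 = y := by
  funext j; simp [xrow, xone]

theorem xrow_xone_ne {i i0 : Fin n} (h : i ≠ i0) (y z : Fin m → Bool) :
    xrow (xone i0 y z) i = z := by
  funext j; simp [xrow, xone, h]

variable {g : (Fin m → Bool) → Bool}

theorem comp_xone_true {i0 : Fin n} {y z : Fin m → Bool} (hy : g y = true) :
    comp (ORn n) g (xone i0 y z) = true :=
  comp_true.mpr ⟨i0, by rw [xrow_xone_self]; exact hy⟩

theorem comp_xall_false {y : Fin m → Bool} (hy : g y = false) :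
    comp (ORn n) g (xall y : Fin n × Fin m → Bool) = false :=
  comp_false.mpr (fun i => by rw [xrow_xall]; exact hy)

theorem exists_comp_true (hn : 0 < n) (hgt : ∃ y, g y = true) (z : Fin m → Bool) :
    ∃ x : Fin n × Fin m → Bool, comp (ORn n) g x = true := by
  obtain ⟨y, hy⟩ := hgt
  exact ⟨xone ⟨0, hn⟩ y z, comp_xone_true hy⟩

theorem exists_comp_false (hgf : ∃ y, g y = false) :
    ∃ x : Fin n × Fin m → Bool, comp (ORn n) g x = false := by
  obtain ⟨y, hy⟩ := hgf
  exact ⟨xall y, comp_xall_false hy⟩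

theorem Cb_true_eq (hn : 0 < n) (hgf : ∃ y, g y = false) (hgt : ∃ y, g y = true) :
    Cb (comp (ORn n) g) true = Cb g true := by
  obtain ⟨z, hz⟩ := hgf
  refine le_antisymm ?_ ?_
  · refine Cb_le (exists_comp_true hn hgt z) (fun x hx => ?_)
    obtain ⟨i, hi⟩ := comp_true.mp hx
    obtain ⟨S, hS, hcard⟩ := exists_CAt g (xrow x i)
    have hcert : IsCert (comp (ORn n) g) x (emb i S) := by
      intro B hB
      obtain ⟨j, hj⟩ := hS _ (block_row_true hi hB)
      rw [Finset.mem_inter, mem_row] at hj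
      exact ⟨(i, j), Finset.mem_inter.mpr ⟨mem_emb.mpr ⟨rfl, hj.1⟩, hj.2⟩⟩
    calc CAt (comp (ORn n) g) x ≤ (emb i S).card := CAt_le hcert
      _ = S.card := card_emb i S
      _ = CAt g (xrow x i) := hcard
      _ ≤ Cb g true := le_Cb hi
  · obtain ⟨y, hy, hCb⟩ := exists_Cb hgt
    set i0 : Fin n := ⟨0, hn⟩
    set x := xone i0 y z with hxdef
    have hxi0 : g (xrow x i0) = true := by rw [xrow_xone_self]; exact hy
    have hoth : ∀ i, i ≠ i0 → g (xrow x i) = false := by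
      intro i h; rw [xrow_xone_ne h]; exact hz
    have hfx : comp (ORn n) g x = true := comp_xone_true hy
    obtain ⟨S, hS, hcard⟩ := exists_CAt (comp (ORn n) g) x
    have hcert : IsCert g y (row i0 S) := by
      intro A hA
      have hA' : IsBlock g (xrow x i0) A := by rwa [xrow_xone_self]
      obtain ⟨p, hp⟩ := hS _ (block_emb_true hxi0 hoth hA')
      rw [Finset.mem_inter, mem_emb] at hp
      refine ⟨p.2, Finset.mem_inter.mpr ⟨mem_row.mpr ?_, hp.2.2⟩⟩
      rw [← hp.2.1]; exact hp.1
    rw [hCb]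
    calc CAt g y ≤ (row i0 S).card := CAt_le hcert
      _ = (S.filter (fun p => p.1 = i0)).card := by
          rw [← card_emb i0, emb_row_filter]
      _ ≤ S.card := Finset.card_filter_le _ _
      _ = CAt (comp (ORn n) g) x := hcard
      _ ≤ Cb (comp (ORn n) g) true := le_Cb hfx

theorem bsb_true_eq (hn : 0 < n) (hgf : ∃ y, g y = false) (hgt : ∃ y, g y = true) :
    bsb (comp (ORn n) g) true = bsb g true := by
  obtain ⟨z, hz⟩ := hgf
  refine le_antisymm ?_ ?_
  · refine bsb_le (exists_comp_true hn hgt z) (fun x hx => ?_)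
    obtain ⟨i, hi⟩ := comp_true.mp hx
    refine bsAt_le (fun k B hB hd => ?_)
    calc k ≤ bsAt g (xrow x i) :=
          le_bsAt (fun t => row i (B t)) (fun t => block_row_true hi (hB t))
            (fun t t' h => disjoint_row_of (hd t t' h))
      _ ≤ bsb g true := le_bsb hi
  · obtain ⟨y, hy, hbs⟩ := exists_bsb hgt
    obtain ⟨B, hB, hd⟩ := exists_bsAt_family g y
    set i0 : Fin n := ⟨0, hn⟩
    set x := xone i0 y z with hxdef
    have hxi0 : g (xrow x i0) = true := by rw [xrow_xone_self]; exact hy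
    have hoth : ∀ i, i ≠ i0 → g (xrow x i) = false := by
      intro i h; rw [xrow_xone_ne h]; exact hz
    have hfx : comp (ORn n) g x = true := comp_xone_true hy
    rw [hbs]
    calc bsAt g y ≤ bsAt (comp (ORn n) g) x := by
          refine le_bsAt (fun t => emb i0 (B t)) (fun t => ?_) (fun t t' h => ?_)
          · refine block_emb_true hxi0 hoth ?_
            rw [xrow_xone_self]; exact hB t
          · exact disjoint_emb_of (hd t t' h)
      _ ≤ bsb (comp (ORn n) g) true := le_bsb hfx

end BS
namespace BS

variable {n m : ℕ} {g : (Fin m → Bool) → Bool}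

theorem Cb_false_eq (hgf : ∃ y, g y = false) :
    Cb (comp (ORn n) g) false = n * Cb g false := by
  refine le_antisymm ?_ ?_
  · refine Cb_le (exists_comp_false hgf) (fun x hx => ?_)
    have hrows := comp_false.mp hx
    choose S hS hScard using fun i : Fin n => exists_CAt g (xrow x i)
    set T := Finset.univ.biUnion (fun i : Fin n => emb i (S i)) with hT
    have hcert : IsCert (comp (ORn n) g) x T := by
      intro B hB
      obtain ⟨i, hi⟩ := block_exists_row_false hrows hB
      obtain ⟨j, hj⟩ := hS i _ hi
      rw [Finset.mem_inter, mem_row] at hj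
      refine ⟨(i, j), Finset.mem_inter.mpr ⟨?_, hj.2⟩⟩
      exact Finset.mem_biUnion.mpr ⟨i, Finset.mem_univ i, mem_emb.mpr ⟨rfl, hj.1⟩⟩
    have hTcard : T.card = ∑ i : Fin n, (S i).card := by
      rw [hT, Finset.card_biUnion (fun i _ i' _ h => disjoint_emb_ne h _ _)]
      exact Finset.sum_congr rfl (fun i _ => card_emb i (S i))
    calc CAt (comp (ORn n) g) x ≤ T.card := CAt_le hcert
      _ = ∑ i : Fin n, (S i).card := hTcard
      _ ≤ ∑ _i : Fin n, Cb g false := by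
          refine Finset.sum_le_sum (fun i _ => ?_)
          rw [hScard i]
          exact le_Cb (hrows i)
      _ = n * Cb g false := by
          rw [Finset.sum_const, Finset.card_univ, Fintype.card_fin, smul_eq_mul]
  · obtain ⟨y, hy, hCb⟩ := exists_Cb hgf
    set x : Fin n × Fin m → Bool := xall y with hxdef
    have hrows : ∀ i : Fin n, g (xrow x i) = false := fun i => hy
    have hfx : comp (ORn n) g x = false := comp_false.mpr hrows
    obtain ⟨S, hS, hScard⟩ := exists_CAt (comp (ORn n) g) x
    have hrowcert : ∀ i : Fin n, CAt g y ≤ (row i S).card := by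
      intro i
      refine CAt_le (fun A hA => ?_)
      have hA' : IsBlock g (xrow x i) A := hA
      obtain ⟨p, hp⟩ := hS _ (block_emb_false hrows hA')
      rw [Finset.mem_inter, mem_emb] at hp
      refine ⟨p.2, Finset.mem_inter.mpr ⟨mem_row.mpr ?_, hp.2.2⟩⟩
      rw [← hp.2.1]; exact hp.1
    rw [hCb]
    calc n * CAt g y = ∑ _i : Fin n, CAt g y := by
          rw [Finset.sum_const, Finset.card_univ, Fintype.card_fin, smul_eq_mul]
      _ ≤ ∑ i : Fin n, (row i S).card := Finset.sum_le_sum (fun i _ => hrowcert i)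
      _ = ∑ i : Fin n, (S.filter (fun p => p.1 = i)).card := by
          refine Finset.sum_congr rfl (fun i _ => ?_)
          rw [← card_emb i, emb_row_filter]
      _ = S.card :=
          (Finset.card_eq_sum_card_fiberwise (fun p _ => Finset.mem_univ p.1)).symm
      _ = CAt (comp (ORn n) g) x := hScard
      _ ≤ Cb (comp (ORn n) g) false := le_Cb hfx

theorem bsb_false_eq (hgf : ∃ y, g y = false) :
    bsb (comp (ORn n) g) false = n * bsb g false := by
  refine le_antisymm ?_ ?_
  · refine bsb_le (exists_comp_false hgf) (fun x hx => ?_)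
    have hrows := comp_false.mp hx
    refine bsAt_le (fun k B hB hd => ?_)
    choose w hw using fun t : Fin k => block_exists_row_false hrows (hB t)
    have hcount : ∀ i : Fin n,
        (Finset.univ.filter (fun t : Fin k => w t = i)).card ≤ bsb g false := by
      intro i
      set s := Finset.univ.filter (fun t : Fin k => w t = i) with hs
      have e := s.equivFin
      have hwmem : ∀ u : Fin s.card, w (e.symm u).1 = i := by
        intro u
        exact (Finset.mem_filter.mp (e.symm u).2).2
      calc s.card ≤ bsAt g (xrow x i) := by
            refine le_bsAt (fun u => row i (B (e.symm u).1)) (fun u => ?_)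
              (fun u u' h => ?_)
            · have := hw (e.symm u).1
              rwa [hwmem u] at this
            · refine disjoint_row_of (hd _ _ (fun hc => h ?_))
              have : (e.symm u) = (e.symm u') := Subtype.ext hc
              exact e.symm.injective this
        _ ≤ bsb g false := le_bsb (hrows i)
    calc k = (Finset.univ : Finset (Fin k)).card := by
          rw [Finset.card_univ, Fintype.card_fin]
      _ = ∑ i : Fin n, (Finset.univ.filter (fun t : Fin k => w t = i)).card :=
          Finset.card_eq_sum_card_fiberwise (fun t _ => Finset.mem_univ (w t))
      _ ≤ ∑ _i : Fin n, bsb g false := Finset.sum_le_sum (fun i _ => hcount i)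
      _ = n * bsb g false := by
          rw [Finset.sum_const, Finset.card_univ, Fintype.card_fin, smul_eq_mul]
  · obtain ⟨y, hy, hbs⟩ := exists_bsb hgf
    obtain ⟨B, hB, hd⟩ := exists_bsAt_family g y
    set x : Fin n × Fin m → Bool := xall y with hxdef
    have hrows : ∀ i : Fin n, g (xrow x i) = false := fun i => hy
    have hfx : comp (ORn n) g x = false := comp_false.mpr hrows
    rw [hbs]
    have hle : n * bsAt g y ≤ bsAt (comp (ORn n) g) x := by
      refine le_bsAt
        (fun u => emb (finProdFinEquiv.symm u).1 (B (finProdFinEquiv.symm u).2))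
        (fun u => block_emb_false hrows (hB _)) (fun u u' h => ?_)
      have hne : finProdFinEquiv.symm u ≠ finProdFinEquiv.symm u' :=
        fun hc => h (finProdFinEquiv.symm.injective hc)
      show Disjoint (emb (finProdFinEquiv.symm u).1 (B (finProdFinEquiv.symm u).2))
        (emb (finProdFinEquiv.symm u').1 (B (finProdFinEquiv.symm u').2))
      by_cases h1 : (finProdFinEquiv.symm u).1 = (finProdFinEquiv.symm u').1
      · have h2 : (finProdFinEquiv.symm u).2 ≠ (finProdFinEquiv.symm u').2 := by
          intro hc; exact hne (Prod.ext h1 hc)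
        rw [h1]
        exact disjoint_emb_of (hd _ _ h2)
      · exact disjoint_emb_ne h1 _ _
    exact hle.trans (le_bsb hfx)

end BS
namespace BS

variable {n m : ℕ}

theorem sum_row_fiber (s : Finset (Finset (Fin n × Fin m))) (i : Fin n) (j : Fin m)
    (lam : Finset (Fin n × Fin m) → ℝ) :
    ∑ A ∈ Finset.univ.filter (fun A : Finset (Fin m) => j ∈ A),
        ∑ B ∈ s.filter (fun B => row i B = A), lam B =
      ∑ B ∈ s.filter (fun B => (i, j) ∈ B), lam B := by
  rw [Finset.sum_filter]
  have h1 : ∀ A : Finset (Fin m),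
      (if j ∈ A then ∑ B ∈ s.filter (fun B => row i B = A), lam B else 0) =
        ∑ B ∈ s.filter (fun B => row i B = A), if (i, j) ∈ B then lam B else 0 := by
    intro A
    split
    next hj =>
      refine Finset.sum_congr rfl (fun B hB => ?_)
      have hrow := (Finset.mem_filter.mp hB).2
      rw [if_pos (mem_row.mp (by rw [hrow]; exact hj))]
    next hj =>
      refine (Finset.sum_eq_zero (fun B hB => ?_)).symm
      have hrow := (Finset.mem_filter.mp hB).2
      refine if_neg (fun hc => hj ?_)
      rw [← hrow]
      exact mem_row.mpr hc
  rw [Finset.sum_congr rfl (fun A _ => h1 A), Finset.sum_fiberwise, ← Finset.sum_filter]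

variable {g : (Fin m → Bool) → Bool}

/-- Pushing a feasible solution for `f = OR ∘ g` at a 1-input down to row `i`. -/
theorem push_feasible {x : Fin n × Fin m → Bool} {i : Fin n} (hi : g (xrow x i) = true)
    {lam : Finset (Fin n × Fin m) → ℝ} (hlam : Feasible (comp (ORn n) g) x lam)
    (s : Finset (Finset (Fin n × Fin m)))
    (hsupp : ∀ B, IsBlock (comp (ORn n) g) x B → lam B ≠ 0 → B ∈ s) :
    Feasible g (xrow x i) (fun A => ∑ B ∈ s.filter (fun B => row i B = A), lam B) := by
  obtain ⟨h0, hsup, hcon⟩ := hlam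
  refine ⟨fun A => Finset.sum_nonneg (fun B _ => h0 B), ?_, ?_⟩
  · intro A hA
    refine Finset.sum_eq_zero (fun B hB => ?_)
    by_contra hne
    have hblk : IsBlock (comp (ORn n) g) x B := by
      by_contra hc; exact hne (hsup B hc)
    refine hA ?_
    rw [← (Finset.mem_filter.mp hB).2]
    exact block_row_true hi hblk
  · intro j
    rw [sum_row_fiber]
    calc ∑ B ∈ s.filter (fun B => (i, j) ∈ B), lam B
        ≤ ∑ B ∈ Finset.univ.filter (fun B => (i, j) ∈ B), lam B := by
          refine Finset.sum_le_sum_of_subset_of_nonneg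
            (Finset.filter_subset_filter _ (Finset.subset_univ s)) (fun B _ _ => h0 B)
      _ ≤ 1 := hcon (i, j)

theorem fbsb_true_eq (hn : 0 < n) (hgf : ∃ y, g y = false) (hgt : ∃ y, g y = true) :
    fbsb (comp (ORn n) g) true = fbsb g true := by
  obtain ⟨z, hz⟩ := hgf
  refine le_antisymm ?_ ?_
  · refine fbsb_le (exists_comp_true hn hgt z) (fun x hx => ?_)
    obtain ⟨i, hi⟩ := comp_true.mp hx
    refine fbsAt_le (fun lam hlam => ?_)
    have hfeas := push_feasible hi hlam Finset.univ (fun B _ _ => Finset.mem_univ B)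
    have htot : ∑ A : Finset (Fin m),
        ∑ B ∈ Finset.univ.filter (fun B => row i B = A), lam B =
        ∑ B : Finset (Fin n × Fin m), lam B :=
      Finset.sum_fiberwise Finset.univ (row i) lam
    calc ∑ B : Finset (Fin n × Fin m), lam B
        = ∑ A : Finset (Fin m),
            ∑ B ∈ Finset.univ.filter (fun B => row i B = A), lam B := htot.symm
      _ ≤ fbsAt g (xrow x i) := le_fbsAt hfeas
      _ ≤ fbsb g true := le_fbsb hi
  · refine fbsb_le hgt (fun y hy => ?_)
    set i0 : Fin n := ⟨0, hn⟩
    set x := xone i0 y z with hxdef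
    have hxi0 : g (xrow x i0) = true := by rw [xrow_xone_self]; exact hy
    have hoth : ∀ i, i ≠ i0 → g (xrow x i) = false := by
      intro i h; rw [xrow_xone_ne h]; exact hz
    have hfx : comp (ORn n) g x = true := comp_xone_true hy
    have key : fbsAt g y ≤ fbsAt (comp (ORn n) g) x := by
      refine fbsAt_le (fun lam hlam => ?_)
      obtain ⟨h0, hsup, hcon⟩ := hlam
      set lam' : Finset (Fin n × Fin m) → ℝ :=
        fun C => if C = emb i0 (row i0 C) then lam (row i0 C) else 0 with hlam'
      have hfeas : Feasible (comp (ORn n) g) x lam' := by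
        refine ⟨fun C => ?_, fun C hC => ?_, fun p => ?_⟩
        · rw [hlam']; dsimp only; split
          · exact h0 _
          · exact le_refl 0
        · rw [hlam']; dsimp only; split
          next h =>
            by_contra hne
            have hA : IsBlock g y (row i0 C) := by
              by_contra hc; exact hne (hsup _ hc)
            have hA' : IsBlock g (xrow x i0) (row i0 C) := by
              rwa [xrow_xone_self]
            refine hC ?_
            rw [h]
            exact block_emb_true hxi0 hoth hA'
          next => rfl
        · obtain ⟨i, j⟩ := p
          rcases eq_or_ne i i0 with rfl | hne
          · calc ∑ C ∈ Finset.univ.filter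
                  (fun C : Finset (Fin n × Fin m) => (i0, j) ∈ C), lam' C
                = ∑ C ∈ (Finset.univ.filter
                    (fun C : Finset (Fin n × Fin m) => (i0, j) ∈ C)).filter
                    (fun C => C = emb i0 (row i0 C)), lam (row i0 C) := by
                  exact (Finset.sum_filter _ _).symm
              _ = ∑ C ∈ Finset.univ.filter
                    (fun C : Finset (Fin n × Fin m) =>
                      (i0, j) ∈ C ∧ C = emb i0 (row i0 C)), lam (row i0 C) := by
                  rw [Finset.filter_filter]
              _ = ∑ A ∈ Finset.univ.filter (fun A : Finset (Fin m) => j ∈ A),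
                    lam (row i0 (emb i0 A)) := by
                  rw [filter_fixed_mem_eq_image, Finset.sum_image
                    (fun A _ A' _ h => emb_injective i0 h)]
              _ = ∑ A ∈ Finset.univ.filter (fun A : Finset (Fin m) => j ∈ A),
                    lam A := by
                  refine Finset.sum_congr rfl (fun A _ => ?_)
                  rw [row_emb]
              _ ≤ 1 := hcon j
          · refine le_trans (le_of_eq (Finset.sum_eq_zero (fun C hC => ?_))) zero_le_one
            rw [hlam']; dsimp only
            refine if_neg (fun hc => hne ?_)
            have hp : (i, j) ∈ C := (Finset.mem_filter.mp hC).2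
            rw [hc] at hp
            exact (mem_emb.mp hp).1
      have htot : ∑ C : Finset (Fin n × Fin m), lam' C = ∑ A : Finset (Fin m), lam A := by
        calc ∑ C : Finset (Fin n × Fin m), lam' C
            = ∑ C ∈ Finset.univ.filter
                (fun C : Finset (Fin n × Fin m) => C = emb i0 (row i0 C)),
                lam (row i0 C) := by
              exact (Finset.sum_filter _ _).symm
          _ = ∑ A ∈ (Finset.univ : Finset (Finset (Fin m))),
                lam (row i0 (emb i0 A)) := by
              rw [filter_fixed_eq_image, Finset.sum_image
                (fun A _ A' _ h => emb_injective i0 h)]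
          _ = ∑ A : Finset (Fin m), lam A := by
              refine Finset.sum_congr rfl (fun A _ => ?_)
              rw [row_emb]
      calc ∑ A : Finset (Fin m), lam A = ∑ C : Finset (Fin n × Fin m), lam' C := htot.symm
        _ ≤ fbsAt (comp (ORn n) g) x := le_fbsAt hfeas
    exact key.trans (le_fbsb hfx)

end BS
namespace BS

variable {n m : ℕ} {g : (Fin m → Bool) → Bool}

theorem fbsb_false_eq (hn : 0 < n) (hgf : ∃ y, g y = false) :
    fbsb (comp (ORn n) g) false = n * fbsb g false := by
  refine le_antisymm ?_ ?_
  · refine fbsb_le (exists_comp_false hgf) (fun x hx => ?_)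
    have hrows := comp_false.mp hx
    refine fbsAt_le (fun lam hlam => ?_)
    obtain ⟨h0, hsup, hcon⟩ := hlam
    have hwit : ∀ B : Finset (Fin n × Fin m), ∃ i : Fin n,
        IsBlock (comp (ORn n) g) x B → IsBlock g (xrow x i) (row i B) := by
      intro B
      by_cases h : IsBlock (comp (ORn n) g) x B
      · obtain ⟨i, hi⟩ := block_exists_row_false hrows h
        exact ⟨i, fun _ => hi⟩
      · exact ⟨⟨0, hn⟩, fun h' => absurd h' h⟩
    choose w hw using hwit
    have hrowle : ∀ i : Fin n,
        ∑ B ∈ Finset.univ.filter (fun B : Finset (Fin n × Fin m) => w B = i), lam B ≤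
          fbsb g false := by
      intro i
      set s := Finset.univ.filter (fun B : Finset (Fin n × Fin m) => w B = i) with hs
      have hfeas : Feasible g (xrow x i)
          (fun A => ∑ B ∈ s.filter (fun B => row i B = A), lam B) := by
        refine ⟨fun A => Finset.sum_nonneg (fun B _ => h0 B), ?_, ?_⟩
        · intro A hA
          refine Finset.sum_eq_zero (fun B hB => ?_)
          by_contra hne
          have hblk : IsBlock (comp (ORn n) g) x B := by
            by_contra hc; exact hne (hsup B hc)
          have hwB : w B = i := (Finset.mem_filter.mp (Finset.mem_filter.mp hB).1).2
          have hblk2 := hw B hblk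
          rw [hwB, (Finset.mem_filter.mp hB).2] at hblk2
          exact hA hblk2
        · intro j
          rw [sum_row_fiber]
          calc ∑ B ∈ s.filter (fun B => (i, j) ∈ B), lam B
              ≤ ∑ B ∈ Finset.univ.filter (fun B => (i, j) ∈ B), lam B :=
                Finset.sum_le_sum_of_subset_of_nonneg
                  (Finset.filter_subset_filter _ (Finset.subset_univ s))
                  (fun B _ _ => h0 B)
            _ ≤ 1 := hcon (i, j)
      calc ∑ B ∈ s, lam B
          = ∑ A : Finset (Fin m), ∑ B ∈ s.filter (fun B => row i B = A), lam B :=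
            (Finset.sum_fiberwise s (row i) lam).symm
        _ ≤ fbsAt g (xrow x i) := le_fbsAt hfeas
        _ ≤ fbsb g false := le_fbsb (hrows i)
    calc ∑ B : Finset (Fin n × Fin m), lam B
        = ∑ i : Fin n, ∑ B ∈ Finset.univ.filter
            (fun B : Finset (Fin n × Fin m) => w B = i), lam B :=
          (Finset.sum_fiberwise Finset.univ w lam).symm
      _ ≤ ∑ _i : Fin n, fbsb g false := Finset.sum_le_sum (fun i _ => hrowle i)
      _ = n * fbsb g false := by
          rw [Finset.sum_const, Finset.card_univ, Fintype.card_fin, nsmul_eq_mul]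
  · have hnR : (0 : ℝ) < n := by exact_mod_cast hn
    have key : ∀ y, g y = false →
        (n : ℝ) * fbsAt g y ≤
          fbsAt (comp (ORn n) g) (xall y : Fin n × Fin m → Bool) := by
      intro y hy
      have hrows : ∀ i : Fin n, g (xrow (xall y : Fin n × Fin m → Bool) i) = false :=
        fun i => hy
      rw [mul_comm, ← le_div_iff₀ hnR]
      refine fbsAt_le (fun lam hlam => ?_)
      obtain ⟨h0, hsup, hcon⟩ := hlam
      rw [le_div_iff₀ hnR]
      set lam' : Finset (Fin n × Fin m) → ℝ :=
        fun C => ∑ i : Fin n, if C = emb i (row i C) then lam (row i C) else 0 with hlam'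
      have hfeas : Feasible (comp (ORn n) g) (xall y) lam' := by
        refine ⟨fun C => ?_, fun C hC => ?_, fun p => ?_⟩
        · refine Finset.sum_nonneg (fun i _ => ?_)
          split
          · exact h0 _
          · exact le_refl 0
        · refine Finset.sum_eq_zero (fun i _ => ?_)
          split
          next h =>
            by_contra hne
            have hA : IsBlock g (xrow (xall y : Fin n × Fin m → Bool) i) (row i C) := by
              by_contra hc; exact hne (hsup _ hc)
            refine hC ?_
            rw [h]
            exact block_emb_false hrows hA
          next => rfl
        · obtain ⟨i, j⟩ := p
          have hcomm : ∑ C ∈ Finset.univ.filter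
              (fun C : Finset (Fin n × Fin m) => (i, j) ∈ C), lam' C
              = ∑ i' : Fin n, ∑ C ∈ Finset.univ.filter
                (fun C : Finset (Fin n × Fin m) => (i, j) ∈ C),
                if C = emb i' (row i' C) then lam (row i' C) else 0 :=
            Finset.sum_comm
          rw [hcomm, Finset.sum_eq_single_of_mem i (Finset.mem_univ i)
            (fun i' _ hne' => Finset.sum_eq_zero (fun C hC => if_neg (fun hc => hne' ?_)))]
          · calc ∑ C ∈ Finset.univ.filter
                  (fun C : Finset (Fin n × Fin m) => (i, j) ∈ C),
                  (if C = emb i (row i C) then lam (row i C) else 0)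
                = ∑ C ∈ (Finset.univ.filter
                    (fun C : Finset (Fin n × Fin m) => (i, j) ∈ C)).filter
                    (fun C => C = emb i (row i C)), lam (row i C) :=
                  (Finset.sum_filter _ _).symm
              _ = ∑ C ∈ Finset.univ.filter
                    (fun C : Finset (Fin n × Fin m) =>
                      (i, j) ∈ C ∧ C = emb i (row i C)), lam (row i C) := by
                  rw [Finset.filter_filter]
              _ = ∑ A ∈ Finset.univ.filter (fun A : Finset (Fin m) => j ∈ A),
                    lam (row i (emb i A)) := by
                  rw [filter_fixed_mem_eq_image, Finset.sum_image
                    (fun A _ A' _ h => emb_injective i h)]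
              _ = ∑ A ∈ Finset.univ.filter (fun A : Finset (Fin m) => j ∈ A),
                    lam A := by
                  refine Finset.sum_congr rfl (fun A _ => ?_)
                  rw [row_emb]
              _ ≤ 1 := hcon j
          · have hp : (i, j) ∈ C := (Finset.mem_filter.mp hC).2
            rw [hc] at hp
            exact ((mem_emb.mp hp).1).symm
      have htot : ∑ C : Finset (Fin n × Fin m), lam' C =
          n * ∑ A : Finset (Fin m), lam A := by
        calc ∑ C : Finset (Fin n × Fin m), lam' C
            = ∑ i : Fin n, ∑ C : Finset (Fin n × Fin m),
                if C = emb i (row i C) then lam (row i C) else 0 := Finset.sum_comm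
          _ = ∑ _i : Fin n, ∑ A : Finset (Fin m), lam A := by
              refine Finset.sum_congr rfl (fun i _ => ?_)
              calc ∑ C : Finset (Fin n × Fin m),
                  (if C = emb i (row i C) then lam (row i C) else 0)
                  = ∑ C ∈ Finset.univ.filter
                      (fun C : Finset (Fin n × Fin m) => C = emb i (row i C)),
                      lam (row i C) := (Finset.sum_filter _ _).symm
                _ = ∑ A ∈ (Finset.univ : Finset (Finset (Fin m))),
                      lam (row i (emb i A)) := by
                    rw [filter_fixed_eq_image, Finset.sum_image
                      (fun A _ A' _ h => emb_injective i h)]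
                _ = ∑ A : Finset (Fin m), lam A := by
                    refine Finset.sum_congr rfl (fun A _ => ?_)
                    rw [row_emb]
          _ = n * ∑ A : Finset (Fin m), lam A := by
              rw [Finset.sum_const, Finset.card_univ, Fintype.card_fin, nsmul_eq_mul]
      calc (∑ A : Finset (Fin m), lam A) * n
          = ∑ C : Finset (Fin n × Fin m), lam' C := by rw [htot, mul_comm]
        _ ≤ fbsAt (comp (ORn n) g) (xall y) := le_fbsAt hfeas
    have h2 : fbsb g false ≤ fbsb (comp (ORn n) g) false / n := by
      refine fbsb_le hgf (fun y hy => ?_)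
      rw [le_div_iff₀ hnR]
      calc fbsAt g y * n = n * fbsAt g y := mul_comm _ _
        _ ≤ fbsAt (comp (ORn n) g) (xall y : Fin n × Fin m → Bool) := key y hy
        _ ≤ fbsb (comp (ORn n) g) false := le_fbsb (comp_xall_false hy)
    calc (n : ℝ) * fbsb g false ≤ n * (fbsb (comp (ORn n) g) false / n) :=
          mul_le_mul_of_nonneg_left h2 (le_of_lt hnR)
      _ = fbsb (comp (ORn n) g) false := by field_simp

end BS
open BS in
/-- Let `g` be a non-constant boolean function on `m` variables and
`f := OR_n ∘ g`.  Then `C_1(f) = C_1(g)`, `bs_1(f) = bs_1(g)`, `bs*_1(f) = bs*_1(g)`,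
`C_0(f) = n·C_0(g)`, `bs_0(f) = n·bs_0(g)` and `bs*_0(f) = n·bs*_0(g)`. -/
theorem or_comp_measures {n m : ℕ} (hn : 0 < n) (g : (Fin m → Bool) → Bool)
    (hgf : ∃ x, g x = false) (hgt : ∃ x, g x = true) :
    Cb (comp (ORn n) g) true = Cb g true ∧
    bsb (comp (ORn n) g) true = bsb g true ∧
    fbsb (comp (ORn n) g) true = fbsb g true ∧
    Cb (comp (ORn n) g) false = n * Cb g false ∧
    bsb (comp (ORn n) g) false = n * bsb g false ∧
    fbsb (comp (ORn n) g) false = n * fbsb g false := by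
  exact ⟨Cb_true_eq hn hgf hgt, bsb_true_eq hn hgf hgt, fbsb_true_eq hn hgf hgt,
    Cb_false_eq hgf, bsb_false_eq hgf, fbsb_false_eq hn hgf⟩
end
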